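/- The cover graph of every finite upper locally distributive lattice admits a U-coloring: coloring each cover x ≺ y by the unique meet-irreducible element in M̄_x \ M̄_y satisfies rules (U1) and (U2). -/

import Mathlib

def UColoring {V κ : Type*} (A : V → V → Prop) (c : V → V → κ) : Prop :=
  (∀ v u w : V, A v u → A v w → u ≠ w → c v u ≠ c v w) ∧
  (∀ v u w : V, A v u → A v w → u ≠ w →
    ∃ z : V, A u z ∧ A w z ∧ c v u = c w z ∧ c v w = c u z)

def MeetIrredL {P : Type*} [Lattice P] [OrderTop P] (m : P) : Prop :=
  (∃! u : P, m ⋖ u) ∨ m = ⊤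

/-- `Mbar z` is the set of meet-irreducible elements above `z`. -/
def Mbar {P : Type*} [Lattice P] [OrderTop P] (z : P) : Set P :=
  {m : P | MeetIrredL m ∧ z ≤ m}

section Aux

variable {P : Type} [Lattice P] [Fintype P] [BoundedOrder P]

/-- If `y ≰ x` then some meet-irreducible above `x` is not above `y`. -/
lemma mbar_exists
    (hULD : ∀ x : P, ∃ M : Finset P, (∀ m ∈ M, MeetIrredL m) ∧ x = M.inf id ∧
      (∀ A : Finset P, (∀ m ∈ A, MeetIrredL m) → x = A.inf id → M ⊆ A))
    (x y : P) (hyx : ¬ y ≤ x) : ∃ m, m ∈ Mbar x ∧ ¬ y ≤ m := by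
  obtain ⟨M, hM, hx, -⟩ := hULD x
  by_contra h
  push_neg at h
  have hy : y ≤ M.inf id := by
    refine Finset.le_inf fun m hm => ?_
    exact h m ⟨hM m hm, hx ▸ Finset.inf_le hm⟩
  exact hyx (hx ▸ hy)

/-- For a cover `x ⋖ y`, the set `Mbar x \ Mbar y` has exactly one element. -/
lemma cover_unique
    (hULD : ∀ x : P, ∃ M : Finset P, (∀ m ∈ M, MeetIrredL m) ∧ x = M.inf id ∧
      (∀ A : Finset P, (∀ m ∈ A, MeetIrredL m) → x = A.inf id → M ⊆ A))
    {x y : P} (hxy : x ⋖ y) : ∃! m, m ∈ Mbar x \ Mbar y := by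
  classical
  obtain ⟨m, hm, hmy⟩ := mbar_exists hULD x y hxy.lt.not_ge
  refine ⟨m, ⟨hm, fun hmem => hmy hmem.2⟩, ?_⟩
  -- uniqueness
  intro m' hm'
  by_contra hne
  -- both m and m' meet y down to x
  obtain ⟨M, hM, hxM, hmin⟩ := hULD x
  obtain ⟨My, hMy, hyMy, -⟩ := hULD y
  have key : ∀ a : P, a ∈ Mbar x \ Mbar y → M ⊆ insert a My := by
    intro a ha
    have hale : ¬ y ≤ a := fun h => ha.2 ⟨ha.1.1, h⟩
    have hmeet : a ⊓ y = x := by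
      rcases hxy.eq_or_eq (le_inf ha.1.2 hxy.lt.le) inf_le_right with h | h
      · exact h
      · exact absurd (h ▸ inf_le_left) hale
    refine hmin _ ?_ ?_
    · intro b hb
      rcases Finset.mem_insert.1 hb with rfl | hb
      · exact ha.1.1
      · exact hMy b hb
    · rw [Finset.inf_insert, id, ← hyMy, hmeet]
  have h1 := key m' hm'
  have h2 := key m ⟨hm, fun hmem => hmy hmem.2⟩
  have hsub : M ⊆ My := by
    intro b hb
    rcases Finset.mem_insert.1 (h1 hb) with rfl | hbb
    · rcases Finset.mem_insert.1 (h2 hb) with h | h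
      · exact absurd h hne
      · exact h
    · exact hbb
  have : y ≤ x := by
    rw [hxM, hyMy]
    exact Finset.inf_mono hsub
  exact hxy.lt.not_ge this

/-- Two distinct covers of `x` are incomparable. -/
lemma cover_not_le {x ya yb : P} (ha : x ⋖ ya) (hb : x ⋖ yb) (hne : ya ≠ yb) :
    ¬ yb ≤ ya := by
  intro h
  rcases ha.eq_or_eq hb.lt.le h with h' | h'
  · exact hb.lt.ne' h'
  · exact hne h'.symm

/-- The join of two distinct covers of `x` covers each of them. -/
lemma sup_covers
    (hULD : ∀ x : P, ∃ M : Finset P, (∀ m ∈ M, MeetIrredL m) ∧ x = M.inf id ∧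
      (∀ A : Finset P, (∀ m ∈ A, MeetIrredL m) → x = A.inf id → M ⊆ A))
    {x ya yb : P} (ha : x ⋖ ya) (hb : x ⋖ yb) (hne : ya ≠ yb) :
    ya ⋖ ya ⊔ yb := by
  obtain ⟨mb, hmb, humb⟩ := cover_unique hULD hb
  have hbmb : ¬ yb ≤ mb := fun h => hmb.2 ⟨hmb.1.1, h⟩
  have hba : ¬ yb ≤ ya := cover_not_le ha hb hne
  -- ya ≤ mb
  obtain ⟨q, hq, hqb⟩ := mbar_exists hULD ya yb hba
  have hqmb : q = mb := humb q ⟨⟨hq.1, ha.lt.le.trans hq.2⟩, fun hm => hqb hm.2⟩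
  have hamb : ya ≤ mb := hqmb ▸ hq.2
  have hlt : ya < ya ⊔ yb := lt_of_le_of_ne le_sup_left
    (fun h => hba (le_sup_right.trans h.ge))
  refine ⟨hlt, fun w hw1 hwz => ?_⟩
  have hybw : ¬ yb ≤ w := fun h => hwz.ne (le_antisymm hwz.le (sup_le hw1.le h))
  -- w ≤ mb
  obtain ⟨q2, hq2, hq2b⟩ := mbar_exists hULD w yb hybw
  have hq2mb : q2 = mb :=
    humb q2 ⟨⟨hq2.1, (ha.lt.trans hw1).le.trans hq2.2⟩, fun hm => hq2b hm.2⟩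
  have hwmb : w ≤ mb := hq2mb ▸ hq2.2
  -- a cover of ya below w
  obtain ⟨w', hcw, hw'w⟩ := exists_covBy_le_of_lt hw1
  obtain ⟨q3, hq3, hq3u⟩ := cover_unique hULD hcw
  have hq3w' : ¬ w' ≤ q3 := fun h => hq3.2 ⟨hq3.1.1, h⟩
  have hq3mb : q3 ≠ mb := by
    intro h
    exact hq3.2 ⟨h ▸ hmb.1.1, h ▸ (hw'w.trans hwmb)⟩
  have hybq3 : yb ≤ q3 := by
    by_contra hc
    exact hq3mb (humb q3 ⟨⟨hq3.1.1, ha.lt.le.trans hq3.1.2⟩, fun hm => hc hm.2⟩)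
  have : ya ⊔ yb ≤ q3 := sup_le hq3.1.2 hybq3
  exact hq3w' (hw'w.trans (hwz.le.trans this))

end Aux

/-- The cover graph of a finite ULD lattice admits a U-coloring: coloring each
cover `x ⋖ y` by the unique meet-irreducible in `Mbar x \ Mbar y` satisfies
(U1) and (U2). -/
theorem stmt_9 {P : Type} [Lattice P] [Fintype P] [BoundedOrder P]
    (hULD : ∀ x : P, ∃ M : Finset P, (∀ m ∈ M, MeetIrredL m) ∧ x = M.inf id ∧
      (∀ A : Finset P, (∀ m ∈ A, MeetIrredL m) → x = A.inf id → M ⊆ A)) :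
    ∃ c : P → P → P,
      (∀ x y : P, x ⋖ y → c x y ∈ Mbar x \ Mbar y) ∧
      UColoring (· ⋖ ·) c := by
  classical
  set c : P → P → P := fun x y =>
    if h : x ⋖ y then (cover_unique hULD h).exists.choose else x with hcdef
  have hspec : ∀ x y : P, x ⋖ y → c x y ∈ Mbar x \ Mbar y := by
    intro x y h
    simp only [hcdef, dif_pos h]
    exact (cover_unique hULD h).exists.choose_spec
  have huniq : ∀ x y m : P, x ⋖ y → m ∈ Mbar x \ Mbar y → m = c x y := by
    intro x y m h hm
    exact (cover_unique hULD h).unique hm (hspec x y h)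
  have hnotle : ∀ x y : P, x ⋖ y → ¬ y ≤ c x y := by
    intro x y h hle
    exact (hspec x y h).2 ⟨(hspec x y h).1.1, hle⟩
  -- (U1)
  have hU1 : ∀ x y1 y2 : P, x ⋖ y1 → x ⋖ y2 → y1 ≠ y2 → c x y1 ≠ c x y2 := by
    intro x y1 y2 h1 h2 hne heq
    have hba : ¬ y2 ≤ y1 := cover_not_le h1 h2 hne
    obtain ⟨q, hq, hqb⟩ := mbar_exists hULD y1 y2 hba
    have hq2 : q = c x y2 :=
      huniq x y2 q h2 ⟨⟨hq.1, h1.lt.le.trans hq.2⟩, fun hm => hqb hm.2⟩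
    have : c x y1 ∈ Mbar y1 := by rw [heq, ← hq2]; exact hq
    exact (hspec x y1 h1).2 this
  -- above the other cover
  have habove : ∀ x y1 y2 : P, x ⋖ y1 → x ⋖ y2 → y1 ≠ y2 → y1 ≤ c x y2 := by
    intro x y1 y2 h1 h2 hne
    have hba : ¬ y2 ≤ y1 := cover_not_le h1 h2 hne
    obtain ⟨q, hq, hqb⟩ := mbar_exists hULD y1 y2 hba
    have hq2 : q = c x y2 :=
      huniq x y2 q h2 ⟨⟨hq.1, h1.lt.le.trans hq.2⟩, fun hm => hqb hm.2⟩
    exact hq2 ▸ hq.2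
  refine ⟨c, hspec, hU1, ?_⟩
  -- (U2)
  intro x y1 y2 h1 h2 hne
  have haz : y1 ⋖ y1 ⊔ y2 := sup_covers hULD h1 h2 hne
  have hbz : y2 ⋖ y1 ⊔ y2 := by
    have h := sup_covers hULD h2 h1 hne.symm
    rwa [sup_comm] at h
  refine ⟨y1 ⊔ y2, haz, hbz, ?_, ?_⟩
  · -- c x y1 = c y2 (y1 ⊔ y2)
    refine huniq y2 (y1 ⊔ y2) (c x y1) hbz ?_
    refine ⟨⟨(hspec x y1 h1).1.1, habove x y2 y1 h2 h1 hne.symm⟩, ?_⟩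
    intro hm
    exact hnotle x y1 h1 (le_sup_left.trans hm.2)
  · -- c x y2 = c y1 (y1 ⊔ y2)
    refine huniq y1 (y1 ⊔ y2) (c x y2) haz ?_
    refine ⟨⟨(hspec x y2 h2).1.1, habove x y1 y2 h1 h2 hne⟩, ?_⟩
    intro hm
    exact hnotle x y2 h2 (le_sup_right.trans hm.2)
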